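/- arXiv:1909.06941 — 2 statements merged into one kernel-verified Lean document; each statement's English description precedes it below -/
import Mathlib

section
/- Define g_n(s,p) = Σ_{i=1}^{n} [n brack i] · (s)_i / p^i for n ≥ 1, where [n brack i] is the unsigned Stirling number of the first kind and (s)_i the falling factorial. Then for every n ≥ 1, the two-variable polynomial (1+x)^n · g_n(s, 1+x), viewed as a polynomial in s and x, has all coefficients nonnegative. -/
open Finset MvPolynomial

/-- Unsigned Stirling numbers of the first kind. -/
def stir : ℕ → ℕ → ℕ
  | 0, 0 => 1
  | 0, _ + 1 => 0
  | _ + 1, 0 => 0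
  | n + 1, i + 1 => stir n i + n * stir n (i + 1)

/-- The polynomial `(1+x)^n g_n(s, 1+x)` in the two variables `s = X 0`, `x = X 1`,
obtained from `g_n(s,p) = ∑_{i=1}^n [n brack i] (s)_i p^{-i}` by substituting
`p = 1 + x` and clearing denominators. -/
noncomputable def gCleared (n : ℕ) : MvPolynomial (Fin 2) ℤ :=
  ∑ i ∈ Finset.Icc 1 n,
    MvPolynomial.C (stir n i : ℤ) * (∏ j ∈ Finset.range i, (X 0 - MvPolynomial.C (j : ℤ)))
      * (1 + X 1) ^ (n - i)

lemma stir_succ_succ (n i : ℕ) : stir (n+1) (i+1) = stir n i + n * stir n (i+1) := rfl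
lemma stir_succ_zero (n : ℕ) : stir (n+1) 0 = 0 := rfl
lemma stir_zero_succ (i : ℕ) : stir 0 (i+1) = 0 := rfl

lemma stir_eq_zero_of_lt : ∀ {n i : ℕ}, n < i → stir n i = 0 := by
  intro n
  induction n with
  | zero => intro i hi; cases i with
    | zero => omega
    | succ i => rfl
  | succ n ih =>
    intro i hi
    cases i with
    | zero => omega
    | succ i =>
      rw [stir_succ_succ, ih (by omega), ih (by omega)]
      ring

/-- `T n j = ∑_{a=1}^n C(n,a)(a-1)! stir(n-a,j)`, with `a = k+1`. -/
def Tn (n j : ℕ) : ℕ := ∑ k ∈ range n, n.choose (k+1) * k.factorial * stir (n-1-k) j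
/-- `T̃ n i = ∑_{a=1}^n C(n,a)(a-1)! stir(n+1-a,i)`. -/
def Ttil (n i : ℕ) : ℕ := ∑ k ∈ range n, n.choose (k+1) * k.factorial * stir (n-k) i
/-- `U n j = ∑_{a=0}^n C(n,a) a! stir(n-a,j)`. -/
def Un (n j : ℕ) : ℕ := ∑ k ∈ range (n+1), n.choose k * k.factorial * stir (n-k) j
/-- `W n i = ∑_{a=2}^n C(n,a)(a-2)! stir(n+1-a,i)`, with `a = k+2`. -/
def Wn (n i : ℕ) : ℕ := ∑ k ∈ range (n-1), n.choose (k+2) * k.factorial * stir (n-1-k) i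

/-- L1 (in descFactorial form). -/
lemma L1d (n j : ℕ) : ∑ m ∈ range (n+1), n.descFactorial (n - m) * stir m j = stir (n+1) (j+1) := by
  induction n generalizing j with
  | zero => simp [stir_succ_succ]
  | succ n ih =>
    rw [Finset.sum_range_succ]
    have h1 : ∀ m ∈ range (n+1), (n+1).descFactorial (n+1-m) * stir m j
        = (n+1) * (n.descFactorial (n-m) * stir m j) := by
      intro m hm
      rw [Finset.mem_range] at hm
      have : n + 1 - m = (n - m) + 1 := by omega
      rw [this, Nat.succ_descFactorial_succ]
      ring
    rw [Finset.sum_congr rfl h1, ← Finset.mul_sum, ih]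
    simp [stir_succ_succ]
    ring

lemma Un_eq (n j : ℕ) : Un n j = stir (n+1) (j+1) := by
  rw [← L1d n j, Un]
  rw [← Finset.sum_range_reflect (fun m => n.descFactorial (n - m) * stir m j) (n+1)]
  apply Finset.sum_congr rfl
  intro k hk
  rw [Finset.mem_range] at hk
  have h1 : n - (n + 1 - 1 - k) = k := by omega
  rw [h1, Nat.descFactorial_eq_factorial_mul_choose]
  have h2 : n + 1 - 1 - k = n - k := by omega
  rw [h2]
  ring

/-- Split off the `k=0` term of `Un`. -/
lemma Un_split (n j : ℕ) :
    Un n j = (∑ k ∈ range n, n.choose (k+1) * (k+1).factorial * stir (n-1-k) j) + stir n j := by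
  rw [Un, Finset.sum_range_succ']
  congr 1
  · apply Finset.sum_congr rfl
    intro k hk
    congr 2
    omega
  · simp

lemma Ttil_eq_of_T (n : ℕ) (hT : ∀ j, Tn n j = (j+1) * stir n (j+1)) :
    ∀ i, Ttil n i = i * stir n i + n * i * stir n (i+1) := by
  intro i
  cases i with
  | zero =>
    have : Ttil n 0 = 0 := by
      apply Finset.sum_eq_zero
      intro k hk
      rw [Finset.mem_range] at hk
      have : n - k = (n - 1 - k) + 1 := by omega
      rw [this, stir_succ_zero, mul_zero]
    rw [this]; ring
  | succ i =>
    -- Ttil n (i+1) + Un n (i+1) = Tn n i + n * Tn n (i+1) + stir n (i+1)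
    have key : Ttil n (i+1) + Un n (i+1) = Tn n i + n * Tn n (i+1) + stir n (i+1) := by
      rw [Un_split]
      have expand : Ttil n (i+1)
          = Tn n i + ∑ k ∈ range n, n.choose (k+1) * k.factorial * ((n-1-k) * stir (n-1-k) (i+1)) := by
        rw [Ttil, Tn, ← Finset.sum_add_distrib]
        apply Finset.sum_congr rfl
        intro k hk
        rw [Finset.mem_range] at hk
        have h1 : n - k = (n - 1 - k) + 1 := by omega
        rw [h1, stir_succ_succ]
        ring
      rw [expand]
      have hsum : (∑ k ∈ range n, n.choose (k+1) * k.factorial * ((n-1-k) * stir (n-1-k) (i+1)))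
          + (∑ k ∈ range n, n.choose (k+1) * (k+1).factorial * stir (n-1-k) (i+1))
          = n * Tn n (i+1) := by
        rw [Tn, Finset.mul_sum, ← Finset.sum_add_distrib]
        apply Finset.sum_congr rfl
        intro k hk
        rw [Finset.mem_range] at hk
        have h2 : (k+1).factorial = (k+1) * k.factorial := rfl
        have h3 : (n - 1 - k) + (k + 1) = n := by omega
        calc n.choose (k+1) * k.factorial * ((n-1-k) * stir (n-1-k) (i+1))
            + n.choose (k+1) * (k+1).factorial * stir (n-1-k) (i+1)
            = n.choose (k+1) * k.factorial * stir (n-1-k) (i+1) * ((n-1-k) + (k+1)) := by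
              rw [h2]; ring
          _ = n * (n.choose (k+1) * k.factorial * stir (n-1-k) (i+1)) := by rw [h3]; ring
      omega
    have hU : Un n (i+1) = stir n (i+1) + n * stir n (i+2) := by
      rw [Un_eq]; rfl
    have hT1 : Tn n i = (i+1) * stir n (i+1) := hT i
    have hT2 : Tn n (i+1) = (i+2) * stir n (i+2) := hT (i+1)
    have goal_add : Ttil n (i+1) + Un n (i+1)
        = ((i+1) * stir n (i+1) + n * (i+1) * stir n (i+2)) + Un n (i+1) := by
      rw [key, hT1, hT2, hU]; ring
    exact Nat.add_right_cancel goal_add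

/-- L2: the marked-cycle identity. -/
lemma L2 : ∀ n j, Tn n j = (j+1) * stir n (j+1) := by
  intro n
  induction n with
  | zero => intro j; simp [Tn, stir_zero_succ]
  | succ n ih =>
    intro j
    have split : Tn (n+1) j = Un n j + Ttil n j := by
      rw [Tn]
      have : ∀ k ∈ range (n+1), (n+1).choose (k+1) * k.factorial * stir (n+1-1-k) j
          = n.choose k * k.factorial * stir (n-k) j + n.choose (k+1) * k.factorial * stir (n-k) j := by
        intro k hk
        have h1 : n + 1 - 1 - k = n - k := by omega
        rw [h1, Nat.choose_succ_succ]
        ring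
      rw [Finset.sum_congr rfl this, Finset.sum_add_distrib]
      have h2 : (∑ k ∈ range (n+1), n.choose (k+1) * k.factorial * stir (n-k) j)
          = Ttil n j := by
        show _ = ∑ k ∈ range n, n.choose (k+1) * k.factorial * stir (n-k) j
        rw [Finset.sum_range_succ]
        have : n.choose (n+1) = 0 := Nat.choose_eq_zero_of_lt (by omega)
        rw [this]
        simp
      rw [h2]
      rfl
    rw [split, Un_eq, Ttil_eq_of_T n ih j, stir_succ_succ]
    ring

lemma L3a (n i : ℕ) : Ttil n i = i * stir n i + n * i * stir n (i+1) :=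
  Ttil_eq_of_T n (L2 n) i

/-- L3: `W n i + i·stir n i = n·stir n i`. -/
lemma L3 (n i : ℕ) : Wn n i + i * stir n i = n * stir n i := by
  cases n with
  | zero =>
    have : Wn 0 i = 0 := by rw [Wn]; simp
    rw [this]
    cases i with
    | zero => simp
    | succ i => rw [stir_zero_succ]; ring
  | succ m =>
    -- E1 : Wn (m+1) i + Ttil (m+1) i = (m+1) * Ttil m i + (m+1) * stir (m+1) i
    have E1 : Wn (m+1) i + Ttil (m+1) i = (m+1) * Ttil m i + (m+1) * stir (m+1) i := by
      have hTtilsplit : Ttil (m+1) i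
          = (∑ k ∈ range m, (m+1).choose (k+2) * (k+1).factorial * stir (m-k) i)
            + (m+1) * stir (m+1) i := by
        rw [Ttil, Finset.sum_range_succ']
        congr 1
        · apply Finset.sum_congr rfl
          intro k hk
          have : m + 1 - (k+1) = m - k := by omega
          rw [this]
        · simp [Nat.choose_one_right]
      rw [hTtilsplit]
      have hW : Wn (m+1) i = ∑ k ∈ range m, (m+1).choose (k+2) * k.factorial * stir (m-k) i := by
        rw [Wn]
        apply Finset.sum_congr (by congr 1) ?_
        intro k hk
        have : m + 1 - 1 - k = m - k := by omega
        rw [this]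
      rw [hW, ← add_assoc, ← Finset.sum_add_distrib]
      congr 1
      show _ = (m+1) * ∑ k ∈ range m, m.choose (k+1) * k.factorial * stir (m-k) i
      rw [Finset.mul_sum]
      apply Finset.sum_congr rfl
      intro k hk
      rw [Finset.mem_range] at hk
      have hc : (m+1) * m.choose (k+1) = (m+1).choose (k+2) * (k+2) := Nat.add_one_mul_choose_eq m (k+1)
      have h2 : (k+1).factorial = (k+1) * k.factorial := rfl
      calc (m+1).choose (k+2) * k.factorial * stir (m-k) i
          + (m+1).choose (k+2) * (k+1).factorial * stir (m-k) i
          = ((m+1).choose (k+2) * (k+2)) * (k.factorial * stir (m-k) i) := by rw [h2]; ring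
        _ = ((m+1) * m.choose (k+1)) * (k.factorial * stir (m-k) i) := by rw [hc]
        _ = (m+1) * (m.choose (k+1) * k.factorial * stir (m-k) i) := by ring
    have hA : Ttil m i = i * stir m i + m * i * stir m (i+1) := L3a m i
    have hB : Ttil (m+1) i = i * stir (m+1) i + (m+1) * i * stir (m+1) (i+1) := L3a (m+1) i
    have hrec : stir (m+1) (i+1) = stir m i + m * stir m (i+1) := rfl
    have goal_add : Wn (m+1) i + i * stir (m+1) i + Ttil (m+1) i
        = (m+1) * stir (m+1) i + Ttil (m+1) i := by
      have lhs_eq : Wn (m+1) i + i * stir (m+1) i + Ttil (m+1) i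
          = (m+1) * Ttil m i + (m+1) * stir (m+1) i + i * stir (m+1) i := by omega
      rw [lhs_eq, hB, hA, hrec]
      ring
    omega
abbrev Rp := MvPolynomial (Fin 2) ℚ

noncomputable def sP : Rp := X 0
noncomputable def xP : Rp := X 1
noncomputable def pP : Rp := 1 + X 1
noncomputable def fall (i : ℕ) : Rp := ∏ j ∈ range i, (X 0 - C (j : ℚ))

noncomputable def Gp : ℕ → Rp
  | 0 => 1
  | n + 1 => ∑ k ∈ range (n+1), C ((stir (n+1) (k+1) : ℚ)) * fall (k+1) * pP ^ (n - k)

lemma fall_succ (k : ℕ) : fall (k+1) = fall k * (sP - C (k : ℚ)) := by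
  rw [fall, Finset.prod_range_succ, fall, sP]

lemma GII (n : ℕ) : Gp (n+1)
    = C ((n : ℚ)) * (xP * Gp n)
      + (∑ k ∈ range (n-1), C (((n.choose (k+2) * k.factorial : ℕ) : ℚ)) * pP ^ (k+1) * Gp (n-1-k))
      + sP * Gp n := by
  cases n with
  | zero =>
    show Gp 1 = _
    have h1 : Gp 1 = C ((stir 1 1 : ℚ)) * fall 1 * pP ^ 0 := by
      rw [Gp, Finset.sum_range_one]
    have h2 : stir 1 1 = 1 := rfl
    rw [h1, h2]
    simp [fall_succ, fall, Gp, sP]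
  | succ m =>
    -- abbreviations
    have hGp2 : Gp (m+2)
        = ∑ k ∈ range (m+2), C ((stir (m+2) (k+1) : ℚ)) * fall (k+1) * pP ^ (m+1-k) := by
      rw [Gp]
    have hsplit : Gp (m+2)
        = (∑ k ∈ range (m+2), C ((stir (m+1) k : ℚ)) * fall (k+1) * pP ^ (m+1-k))
          + (∑ k ∈ range (m+2), C ((((m+1) * stir (m+1) (k+1) : ℕ) : ℚ)) * fall (k+1) * pP ^ (m+1-k)) := by
      rw [hGp2, ← Finset.sum_add_distrib]
      apply Finset.sum_congr rfl
      intro k hk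
      have : stir (m+2) (k+1) = stir (m+1) k + (m+1) * stir (m+1) (k+1) := rfl
      rw [this]
      push_cast
      rw [map_add]
      ring
    -- S2 = C(m+1) * (pP * Gp (m+1))
    have hS2 : (∑ k ∈ range (m+2), C ((((m+1) * stir (m+1) (k+1) : ℕ) : ℚ)) * fall (k+1) * pP ^ (m+1-k))
        = C (((m+1 : ℕ) : ℚ)) * (pP * Gp (m+1)) := by
      rw [Finset.sum_range_succ]
      have hz : stir (m+1) (m+2) = 0 := stir_eq_zero_of_lt (by omega)
      rw [hz]
      simp only [mul_zero, Nat.cast_zero, map_zero, zero_mul, add_zero]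
      rw [Gp, Finset.mul_sum, Finset.mul_sum]
      apply Finset.sum_congr rfl
      intro k hk
      rw [Finset.mem_range] at hk
      have he : m + 1 - k = (m - k) + 1 := by omega
      rw [he, pow_succ]
      push_cast
      rw [map_mul]
      ring
    -- S1 = sP * Gp (m+1) - D
    have hS1 : (∑ k ∈ range (m+2), C ((stir (m+1) k : ℚ)) * fall (k+1) * pP ^ (m+1-k))
        = sP * Gp (m+1)
          - ∑ k ∈ range (m+1), C ((((k+1) * stir (m+1) (k+1) : ℕ) : ℚ)) * fall (k+1) * pP ^ (m-k) := by
      rw [Finset.sum_range_succ']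
      have hz : stir (m+1) 0 = 0 := rfl
      rw [hz]
      simp only [Nat.cast_zero, map_zero, zero_mul, add_zero]
      have hterm : ∀ k ∈ range (m+1),
          C ((stir (m+1) (k+1) : ℚ)) * fall (k+1+1) * pP ^ (m+1-(k+1))
          = sP * (C ((stir (m+1) (k+1) : ℚ)) * fall (k+1) * pP ^ (m-k))
            - C ((((k+1) * stir (m+1) (k+1) : ℕ) : ℚ)) * fall (k+1) * pP ^ (m-k) := by
        intro k hk
        have he : m + 1 - (k+1) = m - k := by omega
        rw [he, fall_succ (k+1)]
        push_cast
        rw [map_mul]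
        ring
      rw [Finset.sum_congr rfl hterm, Finset.sum_sub_distrib, ← Finset.mul_sum, ← Gp]
    -- the W-sum rewritten
    have hW : (∑ k ∈ range m, C ((((m+1).choose (k+2) * k.factorial : ℕ) : ℚ)) * pP ^ (k+1) * Gp (m-k))
        = ∑ i ∈ range (m+1), C ((Wn (m+1) (i+1) : ℚ)) * fall (i+1) * pP ^ (m-i) := by
      have hterm : ∀ k ∈ range m,
          C ((((m+1).choose (k+2) * k.factorial : ℕ) : ℚ)) * pP ^ (k+1) * Gp (m-k)
          = ∑ i ∈ range (m+1),
              C ((((m+1).choose (k+2) * k.factorial * stir (m-k) (i+1) : ℕ) : ℚ))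
                * fall (i+1) * pP ^ (m-i) := by
        intro k hk
        rw [Finset.mem_range] at hk
        have hmk : m - k = (m-k-1) + 1 := by omega
        rw [hmk, Gp, ← hmk]
        rw [Finset.mul_sum]
        rw [← Finset.sum_subset (Finset.range_subset_range.mpr (show m-k ≤ m+1 by omega))]
        · apply Finset.sum_congr rfl
          intro i hi
          rw [Finset.mem_range] at hi
          have he : (k+1) + (m-k-1-i) = m - i := by omega
          push_cast
          simp only [map_mul]
          rw [← he, pow_add]
          ring
        · intro i hi hni
          rw [Finset.mem_range] at hi hni
          have : stir (m-k) (i+1) = 0 := stir_eq_zero_of_lt (by omega)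
          rw [this]
          push_cast
          simp
      rw [Finset.sum_congr rfl hterm, Finset.sum_comm]
      apply Finset.sum_congr rfl
      intro i hi
      rw [Wn]
      simp only [Nat.add_sub_cancel]
      push_cast [map_sum, map_mul, Finset.sum_mul]
      try apply Finset.sum_congr rfl ?_
      try intro k hk
      try ring
    -- final assembly
    have hDW : (∑ k ∈ range (m+1), C ((((k+1) * stir (m+1) (k+1) : ℕ) : ℚ)) * fall (k+1) * pP ^ (m-k))
        + (∑ i ∈ range (m+1), C ((Wn (m+1) (i+1) : ℚ)) * fall (i+1) * pP ^ (m-i))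
        = C (((m+1 : ℕ) : ℚ)) * Gp (m+1) := by
      rw [← Finset.sum_add_distrib, Gp, Finset.mul_sum]
      apply Finset.sum_congr rfl
      intro i hi
      have hL3 : Wn (m+1) (i+1) + (i+1) * stir (m+1) (i+1) = (m+1) * stir (m+1) (i+1) :=
        L3 (m+1) (i+1)
      have : ((m+1 : ℕ) : ℚ) * (stir (m+1) (i+1) : ℚ)
          = (((i+1) * stir (m+1) (i+1) : ℕ) : ℚ) + ((Wn (m+1) (i+1) : ℚ)) := by
        have hc : (Wn (m+1) (i+1) : ℚ) + ((i+1 : ℕ) : ℚ) * (stir (m+1) (i+1) : ℚ)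
            = ((m+1 : ℕ) : ℚ) * (stir (m+1) (i+1) : ℚ) := by exact_mod_cast hL3
        push_cast at hc ⊢
        linarith
      rw [show C (((m+1:ℕ) : ℚ)) * (C ((stir (m+1) (i+1) : ℚ)) * fall (i+1) * pP ^ (m-i))
            = C (((m+1 : ℕ) : ℚ) * (stir (m+1) (i+1) : ℚ)) * fall (i+1) * pP ^ (m-i) by
          rw [map_mul]; ring]
      rw [this, map_add]
      ring
    have hpPG : pP * Gp (m+1) = Gp (m+1) + xP * Gp (m+1) := by
      show (1 + X 1) * Gp (m+1) = Gp (m+1) + X 1 * Gp (m+1)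
      ring
    rw [hsplit, hS1, hS2]
    have hred : m + 1 - 1 = m := by omega
    rw [hred, hW]
    linear_combination (-1 : Rp) * hDW + C (((m+1 : ℕ) : ℚ)) * hpPG

/-! ### Nonnegativity predicate -/

def NN (φ : Rp) : Prop := ∀ d : Fin 2 →₀ ℕ, 0 ≤ MvPolynomial.coeff d φ

lemma NN_add {φ ψ : Rp} (h1 : NN φ) (h2 : NN ψ) : NN (φ + ψ) := fun d => by
  rw [MvPolynomial.coeff_add]; exact add_nonneg (h1 d) (h2 d)

lemma NN_mul {φ ψ : Rp} (h1 : NN φ) (h2 : NN ψ) : NN (φ * ψ) := fun d => by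
  rw [MvPolynomial.coeff_mul]
  exact Finset.sum_nonneg fun x _ => mul_nonneg (h1 x.1) (h2 x.2)

lemma NN_sum {ι : Type*} {s : Finset ι} {f : ι → Rp} (h : ∀ i ∈ s, NN (f i)) :
    NN (∑ i ∈ s, f i) := fun d => by
  rw [MvPolynomial.coeff_sum]
  exact Finset.sum_nonneg fun i hi => h i hi d

lemma NN_C {c : ℚ} (hc : 0 ≤ c) : NN (C c) := fun d => by
  rw [MvPolynomial.coeff_C]
  split_ifs
  · exact hc
  · exact le_rfl

lemma NN_one : NN (1 : Rp) := by
  have : (1 : Rp) = C 1 := by simp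
  rw [this]; exact NN_C zero_le_one

lemma NN_X (i : Fin 2) : NN (X i : Rp) := fun d => by
  rw [MvPolynomial.coeff_X']
  split_ifs
  · exact zero_le_one
  · exact le_rfl

lemma NN_pow {φ : Rp} (h : NN φ) (k : ℕ) : NN (φ ^ k) := by
  induction k with
  | zero => simpa using NN_one
  | succ k ih => rw [pow_succ]; exact NN_mul ih h

lemma NN_sP : NN sP := NN_X 0
lemma NN_xP : NN xP := NN_X 1
lemma NN_pP : NN pP := NN_add NN_one (NN_X 1)

/-! ### The series `C = (1+L)(1-pz)` and its inverse `B` -/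

noncomputable def Cc : ℕ → Rp
  | 0 => 1
  | 1 => -xP
  | (k+2) => -(C ((((k+2) * (k+1) : ℕ) : ℚ)⁻¹)) * pP ^ (k+1)

noncomputable def Bc : ℕ → Rp
  | 0 => 1
  | (n+1) => -∑ k ∈ (range (n+1)).attach, Bc k.1 * Cc (n+1 - k.1)
  decreasing_by exact Finset.mem_range.mp k.2

lemma Bc_succ (n : ℕ) : Bc (n+1) = -∑ k ∈ range (n+1), Bc k * Cc (n+1-k) := by
  rw [Bc]
  congr 1
  exact Finset.sum_attach (range (n+1)) (fun k => Bc k * Cc (n+1-k))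

lemma NN_negCc (j : ℕ) (hj : 1 ≤ j) : NN (-Cc j) := by
  match j, hj with
  | 1, _ =>
    have : -Cc 1 = xP := by rw [Cc]; ring
    rw [this]; exact NN_xP
  | (k+2), _ =>
    have : -Cc (k+2) = C ((((k+2) * (k+1) : ℕ) : ℚ)⁻¹) * pP ^ (k+1) := by rw [Cc]; ring
    rw [this]
    exact NN_mul (NN_C (by positivity)) (NN_pow NN_pP _)

lemma NN_Bc : ∀ n, NN (Bc n) := by
  intro n
  induction n using Nat.strong_induction_on with
  | _ n ih =>
    match n with
    | 0 =>
      have h0 : Bc 0 = 1 := by rw [Bc]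
      rw [h0]; exact NN_one
    | (n+1) =>
      have aux : ∑ k ∈ range (n+1), Bc k * -Cc (n+1-k)
          = -∑ k ∈ range (n+1), Bc k * Cc (n+1-k) := by
        simp only [mul_neg]
        exact Finset.sum_neg_distrib _
      have h : Bc (n+1) = ∑ k ∈ range (n+1), Bc k * -Cc (n+1-k) := by
        rw [Bc_succ]; exact aux.symm
      rw [h]
      apply NN_sum
      intro k hk
      rw [Finset.mem_range] at hk
      exact NN_mul (ih k (by omega)) (NN_negCc _ (by omega))

/-! ### Power series -/

noncomputable def Cs : PowerSeries Rp := PowerSeries.mk Cc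
noncomputable def Bs : PowerSeries Rp := PowerSeries.mk Bc
noncomputable def Ys : PowerSeries Rp := PowerSeries.mk fun n => C ((n.factorial : ℚ)⁻¹) * Gp n
noncomputable def Yd : PowerSeries Rp := PowerSeries.mk fun n => C ((n.factorial : ℚ)⁻¹) * Gp (n+1)

lemma hBC : Bs * Cs = 1 := by
  ext n : 1
  rw [PowerSeries.coeff_mul, Finset.Nat.sum_antidiagonal_eq_sum_range_succ_mk]
  simp only [Cs, Bs, PowerSeries.coeff_mk]
  cases n with
  | zero =>
    simp [Bc, Cc]
  | succ n =>
    rw [Finset.sum_range_succ, Nat.sub_self]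
    have h0 : Cc 0 = 1 := rfl
    rw [h0, mul_one, Bc_succ]
    simp [PowerSeries.coeff_one]

lemma Gp_one : Gp 1 = sP := by
  have h1 : Gp 1 = C ((stir 1 1 : ℚ)) * fall 1 * pP ^ 0 := by
    rw [Gp, Finset.sum_range_one]
  have h2 : stir 1 1 = 1 := rfl
  rw [h1, h2, fall_succ, fall]
  simp

lemma hYdC : Yd * Cs = PowerSeries.C sP * Ys := by
  ext n : 1
  rw [PowerSeries.coeff_mul, Finset.Nat.sum_antidiagonal_eq_sum_range_succ_mk,
    PowerSeries.coeff_C_mul]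
  simp only [Cs, Yd, Ys, PowerSeries.coeff_mk]
  cases n with
  | zero =>
    rw [Finset.sum_range_one]
    have h0 : Cc 0 = 1 := rfl
    have hg0 : Gp 0 = 1 := rfl
    norm_num [h0, Gp_one, hg0]
  | succ m =>
    -- peel k = m+1 and k = m
    rw [Finset.sum_range_succ, Finset.sum_range_succ, Nat.sub_self]
    have h0 : Cc 0 = 1 := rfl
    have h1 : m + 1 - m = 1 := by omega
    rw [h0, h1, mul_one]
    have hCc1 : Cc 1 = -xP := rfl
    rw [hCc1]
    -- GII at m+1
    have hG := GII (m+1)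
    simp only [Nat.add_sub_cancel] at hG
    -- facts about factorials
    have hfne : ((m.factorial : ℚ)) ≠ 0 := by exact_mod_cast m.factorial_ne_zero
    have hfne1 : (((m+1).factorial : ℚ)) ≠ 0 := by exact_mod_cast (m+1).factorial_ne_zero
    have hfs : (((m+1).factorial : ℚ)) = ((m+1 : ℕ) : ℚ) * (m.factorial : ℚ) := by
      rw [Nat.factorial_succ]
      push_cast
      ring
    have hC1 : (C (((m+1).factorial : ℚ)⁻¹) : Rp) * C ((((m+1) : ℕ) : ℚ)) = C ((m.factorial : ℚ)⁻¹) := by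
      rw [← map_mul]
      congr 1
      rw [hfs]
      field_simp
    -- the sum part
    have hsum : C (((m+1).factorial : ℚ)⁻¹)
          * (∑ k ∈ range m, C ((((m+1).choose (k+2) * k.factorial : ℕ) : ℚ)) * pP ^ (k+1) * Gp (m-k))
        = -∑ k ∈ range m, C ((k.factorial : ℚ)⁻¹) * Gp (k+1) * Cc (m+1-k) := by
      have aux : ∑ k ∈ range m, -(C ((k.factorial : ℚ)⁻¹) * Gp (k+1) * Cc (m+1-k))
          = -∑ k ∈ range m, C ((k.factorial : ℚ)⁻¹) * Gp (k+1) * Cc (m+1-k) :=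
        Finset.sum_neg_distrib _
      rw [← aux, Finset.mul_sum,
        ← Finset.sum_range_reflect (fun k => -(C ((k.factorial : ℚ)⁻¹) * Gp (k+1) * Cc (m+1-k))) m]
      apply Finset.sum_congr rfl
      intro k hk
      rw [Finset.mem_range] at hk
      have e1 : m - 1 - k + 1 = m - k := by omega
      have e2 : m + 1 - (m - 1 - k) = k + 2 := by omega
      rw [e1, e2]
      have hCc2 : Cc (k+2) = -(C ((((k+2) * (k+1) : ℕ) : ℚ)⁻¹)) * pP ^ (k+1) := rfl
      rw [hCc2]
      have hnn : (m+1).choose (k+2) * (k+2).factorial * (m-1-k).factorial = (m+1).factorial := by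
        have h := Nat.choose_mul_factorial_mul_factorial (show k+2 ≤ m+1 by omega)
        rw [show m + 1 - (k+2) = m - 1 - k by omega] at h
        exact h
      have hnat : ((m+1).choose (k+2) : ℚ) * ((k+2).factorial : ℚ) * ((m-1-k).factorial : ℚ)
          = ((m+1).factorial : ℚ) := by exact_mod_cast hnn
      have hf2 : ((k+2).factorial : ℚ) = (((k+2) * (k+1) : ℕ) : ℚ) * (k.factorial : ℚ) := by
        rw [Nat.factorial_succ, Nat.factorial_succ]
        push_cast
        ring
      have hkne : ((k.factorial : ℚ)) ≠ 0 := by exact_mod_cast k.factorial_ne_zero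
      have hmkne : (((m-1-k).factorial : ℚ)) ≠ 0 := by exact_mod_cast (m-1-k).factorial_ne_zero
      have hprodne : ((((k+2) * (k+1) : ℕ) : ℚ)) ≠ 0 := by positivity
      have hkey : (((m+1).choose (k+2) * k.factorial : ℕ) : ℚ)
            * (((m-1-k).factorial : ℚ) * ((((k+2) * (k+1) : ℕ)) : ℚ))
          = ((m+1).factorial : ℚ) := by
        push_cast
        push_cast at hnat hf2
        linear_combination hnat - ((((m+1).choose (k+2)) : ℚ) * (((m-1-k)).factorial : ℚ)) * hf2
      have hsc : (((m+1).factorial : ℚ))⁻¹ * (((m+1).choose (k+2) * k.factorial : ℕ) : ℚ)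
          = ((m-1-k).factorial : ℚ)⁻¹ * ((((k+2) * (k+1) : ℕ) : ℚ))⁻¹ := by
        push_cast at hkey ⊢
        field_simp
        linear_combination hkey
      have hCsc : (C ((((m+1).factorial : ℚ))⁻¹) : Rp) * C ((((m+1).choose (k+2) * k.factorial : ℕ) : ℚ))
          = C (((m-1-k).factorial : ℚ)⁻¹) * C (((((k+2) * (k+1) : ℕ)) : ℚ)⁻¹) := by
        rw [← map_mul, ← map_mul, hsc]
      linear_combination (pP ^ (k+1) * Gp (m-k)) * hCsc
    rw [hG]
    linear_combination hsum + (xP * Gp (m+1)) * hC1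

/-! ### The key positive formula and positivity of `Gp` -/

lemma hYfact : Yd = PowerSeries.C sP * (Ys * Bs) := by
  have h1 : Yd * (Cs * Bs) = Yd := by
    rw [mul_comm Cs Bs, hBC, mul_one]
  calc Yd = Yd * (Cs * Bs) := h1.symm
    _ = (Yd * Cs) * Bs := by ring
    _ = (PowerSeries.C sP * Ys) * Bs := by rw [hYdC]
    _ = PowerSeries.C sP * (Ys * Bs) := by ring

lemma hKey (n : ℕ) : Gp (n+1)
    = C ((n.factorial : ℚ)) * (sP * ∑ k ∈ range (n+1),
        C ((k.factorial : ℚ)⁻¹) * Gp k * Bc (n-k)) := by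
  have h := congrArg (PowerSeries.coeff n) hYfact
  rw [PowerSeries.coeff_C_mul, PowerSeries.coeff_mul,
    Finset.Nat.sum_antidiagonal_eq_sum_range_succ_mk] at h
  simp only [Yd, Ys, Bs, PowerSeries.coeff_mk] at h
  have hfne : ((n.factorial : ℚ)) ≠ 0 := by exact_mod_cast n.factorial_ne_zero
  have h2 : (C ((n.factorial : ℚ)) : Rp) * (C ((n.factorial : ℚ)⁻¹) * Gp (n+1)) = Gp (n+1) := by
    rw [← mul_assoc, ← map_mul, mul_inv_cancel₀ hfne]
    try simp
  calc Gp (n+1) = C ((n.factorial : ℚ)) * (C ((n.factorial : ℚ)⁻¹) * Gp (n+1)) := h2.symm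
    _ = C ((n.factorial : ℚ)) * (sP * ∑ k ∈ range (n+1),
          C ((k.factorial : ℚ)⁻¹) * Gp k * Bc (n-k)) := by
        rw [h]
        try congr 1
        try rw [Finset.mul_sum]
        try apply Finset.sum_congr rfl
        try intro k _
        try ring

lemma NN_Gp : ∀ n, NN (Gp n) := by
  intro n
  induction n using Nat.strong_induction_on with
  | _ n ih =>
    match n with
    | 0 => exact NN_one
    | (n+1) =>
      rw [hKey n]
      apply NN_mul (NN_C (by positivity))
      apply NN_mul NN_sP
      apply NN_sum
      intro k hk
      rw [Finset.mem_range] at hk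
      exact NN_mul (NN_mul (NN_C (by positivity)) (ih k (by omega))) (NN_Bc _)

/-! ### Bridge to `gCleared` -/

lemma sum_Icc_one {M : Type*} [AddCommMonoid M] (n : ℕ) (f : ℕ → M) :
    ∑ i ∈ Icc 1 n, f i = ∑ k ∈ range n, f (k+1) := by
  induction n with
  | zero => simp
  | succ n ih =>
    rw [Finset.sum_Icc_succ_top (by omega), ih, Finset.sum_range_succ]

lemma map_gCleared (n : ℕ) (hn : 1 ≤ n) :
    MvPolynomial.map (Int.castRingHom ℚ) (gCleared n) = Gp n := by
  obtain ⟨m, rfl⟩ : ∃ m, n = m + 1 := ⟨n - 1, by omega⟩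
  rw [gCleared, map_sum, sum_Icc_one, Gp]
  apply Finset.sum_congr rfl
  intro k hk
  rw [Finset.mem_range] at hk
  rw [map_mul, map_mul, map_pow, map_add, map_one]
  have h1 : MvPolynomial.map (Int.castRingHom ℚ) ((MvPolynomial.C ((stir (m+1) (k+1) : ℤ))) : MvPolynomial (Fin 2) ℤ)
      = (C ((stir (m+1) (k+1) : ℚ)) : Rp) := by
    rw [MvPolynomial.map_C]
    simp
  have h2 : MvPolynomial.map (Int.castRingHom ℚ)
        (∏ j ∈ Finset.range (k+1), (X 0 - MvPolynomial.C ((j : ℤ))))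
      = fall (k+1) := by
    rw [map_prod, fall]
    apply Finset.prod_congr rfl
    intro j _
    rw [map_sub, MvPolynomial.map_X, MvPolynomial.map_C]
    simp
  rw [h1, h2, MvPolynomial.map_X]
  have h3 : m + 1 - (k + 1) = m - k := by omega
  rw [h3]
  rfl

theorem stmt_8 (n : ℕ) (hn : 1 ≤ n) (d : Fin 2 →₀ ℕ) :
    0 ≤ MvPolynomial.coeff d (gCleared n) := by
  have hq : 0 ≤ MvPolynomial.coeff d (Gp n) := NN_Gp n d
  rw [← map_gCleared n hn, MvPolynomial.coeff_map] at hq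
  simp only [Int.coe_castRingHom] at hq
  exact_mod_cast hq
end

section
/- Let A_{m,i}^k be the integers satisfying A_{m,i}^k = (k-1)(A_{m-1,i}^{k-1} + A_{m-1,i}^{k-2} + A_{m-1,i-1}^{k-2}) + (k+i-m-1)A_{m-1,i-1}^{k-1}, A_{0,0}^k = δ_{k,0}, A_{m,-1}^k = 0, A_{m,i}^{k} = 0 for k < 0. Then for every n ≥ 1, (1+x)^n g_n(s,1+x) = s^n + Σ_{m=1}^{n} Σ_{j=0}^{m} s^{n-m} x^j Σ_{k=m+1}^{2m} C(n,k) Σ_{i=0}^{m} (-1)^i C(m-i,j) A_{m,i}^k, as an identity of polynomials in s and x, where g_n(s,p) = Σ_{i=1}^n [n brack i](s)_i/p^i. -/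
open Finset MvPolynomial

/-- The three-parameter family of integers `A_{m,i}^k`. -/
def A : ℕ → ℤ → ℤ → ℤ
  | 0, i, k => if i = 0 ∧ k = 0 then 1 else 0
  | m + 1, i, k =>
      if i < 0 ∨ k < 0 then 0
      else (k - 1) * (A m i (k - 1) + A m i (k - 2) + A m (i - 1) (k - 2))
            + (k + i - (m + 1) - 1) * A m (i - 1) (k - 1)

lemma stir_eq_zero {n k : ℕ} (h : n < k) : stir n k = 0 := by
  induction n generalizing k with
  | zero => cases k with
    | zero => omega
    | succ k => rfl
  | succ n ih =>
    cases k with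
    | zero => omega
    | succ k =>
      rw [stir, ih (by omega), ih (by omega)]; ring

lemma stir_self (n : ℕ) : stir n n = 1 := by
  induction n with
  | zero => rfl
  | succ n ih => rw [stir, ih, stir_eq_zero (by omega)]; ring

lemma A_neg {m : ℕ} {i k : ℤ} (h : i < 0 ∨ k < 0) : A m i k = 0 := by
  cases m with
  | zero => simp only [A]; rw [if_neg]; push_neg; rcases h with h | h <;> intro h' <;> omega
  | succ m => simp [A, h]

lemma A_low {m : ℕ} {i k : ℤ} (hm : 1 ≤ m) (hk : k ≤ m) : A m i k = 0 := by
  induction m generalizing i k with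
  | zero => omega
  | succ m ih =>
    by_cases h : i < 0 ∨ k < 0
    · exact A_neg h
    push_neg at h
    rw [A, if_neg (by push_neg; exact h)]
    cases Nat.eq_zero_or_pos m with
    | inl hm0 =>
      subst hm0
      have hk0 : k = 0 ∨ k = 1 := by omega
      rcases hk0 with rfl | rfl
      · rw [A_neg (Or.inr (by norm_num)), A_neg (Or.inr (by norm_num)),
          A_neg (Or.inr (by norm_num)), A_neg (Or.inr (by norm_num))]
        ring
      · rw [show (1:ℤ) - 2 = -1 by ring,
          A_neg (m:=0) (i:=i) (k:=-1) (Or.inr (by norm_num)),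
          A_neg (m:=0) (i:=i-1) (k:=-1) (Or.inr (by norm_num))]
        simp only [A, sub_self]
        split_ifs <;> omega
    | inr hm1 =>
      rw [ih hm1 (by omega), ih hm1 (by omega), ih hm1 (by omega), ih hm1 (by omega)]
      ring

lemma A_high {m : ℕ} {i k : ℤ} (hk : 2 * m < k) : A m i k = 0 := by
  induction m generalizing i k with
  | zero => simp only [A]; rw [if_neg]; push_neg; intro; omega
  | succ m ih =>
    by_cases h : i < 0 ∨ k < 0
    · exact A_neg h
    rw [A, if_neg h, ih (by omega), ih (by omega), ih (by omega), ih (by omega)]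
    ring

lemma choose_id (N k : ℕ) :
    (N:ℤ) * (N.choose k : ℤ) = (k:ℤ) * (N.choose k : ℤ) + ((k:ℤ)+1) * (N.choose (k+1) : ℤ) := by
  rcases le_or_gt k N with h | h
  · have := Nat.choose_succ_right_eq N k
    zify [h] at this
    linear_combination -this
  · rw [Nat.choose_eq_zero_of_lt h, Nat.choose_eq_zero_of_lt (by omega)]
    simp

lemma h1 (m N : ℕ) (j : ℤ) :
    (N:ℤ) * ∑ k ∈ range (2*m+1), A m j k * (N.choose k : ℤ)
      = ∑ k ∈ range (2*m+2),
          ((k:ℤ) * A m j k + (k:ℤ) * A m j ((k:ℤ)-1)) * (N.choose k : ℤ) := by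
  have e2 : ∑ k ∈ range (2*m+2), (k:ℤ) * A m j ((k:ℤ)-1) * (N.choose k : ℤ)
      = ∑ k ∈ range (2*m+1), ((k:ℤ)+1) * A m j k * (N.choose (k+1) : ℤ) := by
    rw [Finset.sum_range_succ']
    have e3 : ∀ k ∈ range (2*m+1),
        ((k+1:ℕ):ℤ) * A m j (((k+1:ℕ):ℤ)-1) * (N.choose (k+1) : ℤ)
          = ((k:ℤ)+1) * A m j k * (N.choose (k+1) : ℤ) := by
      intro k _; push_cast; ring_nf
    rw [Finset.sum_congr rfl e3]
    simp
  have e4 : ∑ k ∈ range (2*m+2), (k:ℤ) * A m j k * (N.choose k : ℤ)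
      = ∑ k ∈ range (2*m+1), (k:ℤ) * A m j k * (N.choose k : ℤ) := by
    rw [Finset.sum_range_succ, A_high (by push_cast; omega)]; ring
  have e6 : ∑ k ∈ range (2*m+2), ((k:ℤ) * A m j k + (k:ℤ) * A m j ((k:ℤ)-1)) * (N.choose k:ℤ)
      = ∑ k ∈ range (2*m+2), ((k:ℤ) * A m j k * (N.choose k:ℤ)
          + (k:ℤ) * A m j ((k:ℤ)-1) * (N.choose k:ℤ)) :=
    Finset.sum_congr rfl (fun k _ => by ring)
  rw [Finset.mul_sum, e6, Finset.sum_add_distrib, e2, e4, ← Finset.sum_add_distrib]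
  exact Finset.sum_congr rfl (fun k _ => by linear_combination (A m j k) * choose_id N k)

lemma step (m n : ℕ) (i : ℤ) :
    ∑ k ∈ range (2*m+3), A (m+1) i k * ((m+n+2).choose k : ℤ)
      = ∑ k ∈ range (2*m+3), A (m+1) i k * ((m+n+1).choose k : ℤ)
        + ((n:ℤ) + i) * ∑ k ∈ range (2*m+1), A m (i-1) k * ((m+n+1).choose k : ℤ)
        + ((m:ℤ)+n+1) * ∑ k ∈ range (2*m+1), A m i k * ((m+n+1).choose k : ℤ) := by
  by_cases hi : i < 0
  · have z1 : ∀ k ∈ range (2*m+3), A (m+1) i k * ((m+n+2).choose k : ℤ) = 0 := by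
      intro k _; rw [A_neg (Or.inl hi)]; ring
    have z2 : ∀ k ∈ range (2*m+3), A (m+1) i k * ((m+n+1).choose k : ℤ) = 0 := by
      intro k _; rw [A_neg (Or.inl hi)]; ring
    have z3 : ∀ k ∈ range (2*m+1), A m (i-1) k * ((m+n+1).choose k : ℤ) = 0 := by
      intro k _; rw [A_neg (Or.inl (by omega))]; ring
    have z4 : ∀ k ∈ range (2*m+1), A m i k * ((m+n+1).choose k : ℤ) = 0 := by
      intro k _; rw [A_neg (Or.inl hi)]; ring
    rw [Finset.sum_congr rfl z1, Finset.sum_congr rfl z2, Finset.sum_congr rfl z3,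
      Finset.sum_congr rfl z4]
    simp
  push_neg at hi
  set N := m+n+1 with hN
  have hsplit : ∑ k ∈ range (2*m+3), A (m+1) i k * ((N+1).choose k : ℤ)
      = ∑ k ∈ range (2*m+2), A (m+1) i ((k:ℤ)+1) * (N.choose k : ℤ)
        + ∑ k ∈ range (2*m+3), A (m+1) i k * (N.choose k : ℤ) := by
    rw [Finset.sum_range_succ' (fun k => A (m+1) i k * ((N+1).choose k : ℤ)),
        Finset.sum_range_succ' (fun k => A (m+1) i k * (N.choose k : ℤ))]
    have e : ∀ k ∈ range (2*m+2),
        A (m+1) i ((k+1:ℕ)) * (((N+1).choose (k+1) : ℕ) : ℤ)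
          = A (m+1) i ((k:ℤ)+1) * (N.choose k : ℤ)
            + A (m+1) i ((k+1:ℕ)) * ((N.choose (k+1) : ℕ) : ℤ) := by
      intro k _
      rw [Nat.choose_succ_succ]
      push_cast
      ring
    rw [Finset.sum_congr rfl e, Finset.sum_add_distrib]
    simp
    ring
  rw [hsplit]
  have hA : ∀ k : ℕ, A (m+1) i ((k:ℤ)+1)
      = ((k:ℤ) * A m i k + (k:ℤ) * A m i ((k:ℤ)-1))
        + ((k:ℤ) * A m (i-1) ((k:ℤ)-1) + (k:ℤ) * A m (i-1) k)
        + (i - (m:ℤ) - 1) * A m (i-1) k := by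
    intro k
    rw [A, if_neg (by push_neg; constructor <;> omega)]
    have e1 : (k:ℤ) + 1 - 1 = (k:ℤ) := by ring
    have e2 : (k:ℤ) + 1 - 2 = (k:ℤ) - 1 := by ring
    rw [e1, e2]
    ring
  have main : ∑ k ∈ range (2*m+2), A (m+1) i ((k:ℤ)+1) * (N.choose k : ℤ)
      = ((n:ℤ) + i) * ∑ k ∈ range (2*m+1), A m (i-1) k * (N.choose k : ℤ)
        + ((m:ℤ)+n+1) * ∑ k ∈ range (2*m+1), A m i k * (N.choose k : ℤ) := by
    have e : ∀ k ∈ range (2*m+2), A (m+1) i ((k:ℤ)+1) * (N.choose k : ℤ)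
        = ((k:ℤ) * A m i k + (k:ℤ) * A m i ((k:ℤ)-1)) * (N.choose k : ℤ)
          + ((k:ℤ) * A m (i-1) k + (k:ℤ) * A m (i-1) ((k:ℤ)-1)) * (N.choose k : ℤ)
          + (i - (m:ℤ) - 1) * (A m (i-1) k * (N.choose k : ℤ)) := by
      intro k _
      rw [hA k]
      ring
    rw [Finset.sum_congr rfl e, Finset.sum_add_distrib, Finset.sum_add_distrib,
      ← h1 m N i, ← h1 m N (i-1), ← Finset.mul_sum]
    have e5 : ∑ k ∈ range (2*m+2), A m (i-1) k * (N.choose k : ℤ)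
        = ∑ k ∈ range (2*m+1), A m (i-1) k * (N.choose k : ℤ) := by
      rw [Finset.sum_range_succ, A_high (by push_cast; omega)]
      ring
    rw [e5]
    have : ((m:ℤ)+n+1) = (N:ℤ) := by rw [hN]; push_cast; ring
    rw [this]
    rw [hN]
    push_cast
    ring
  rw [main]
  push_cast
  ring

lemma stir_succ (a b : ℕ) : stir (a+1) (b+1) = stir a b + a * stir a (b+1) := rfl

lemma key : ∀ (m i n : ℕ), ((stir (m+n) (n+i) : ℤ) * (stir (n+i) n : ℤ))
    = ∑ k ∈ range (2*m+1), A m i k * ((m+n).choose k : ℤ) := by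
  intro m
  induction m with
  | zero =>
    intro i n
    norm_num [Finset.sum_range_one]
    cases i with
    | zero => simp [stir_self, A]
    | succ j =>
      rw [stir_eq_zero (show n < n + (j+1) by omega)]
      have hA : A 0 ((j+1:ℕ):ℤ) 0 = 0 := by
        simp only [A]
        rw [if_neg]
        push_neg
        intro h
        exfalso
        omega
      push_cast at hA ⊢
      rw [hA]
      simp
  | succ m ihm =>
    intro i n
    induction n with
    | zero =>
      have hL : (stir (m+1+0) (0+i) : ℤ) * (stir (0+i) 0 : ℤ) = 0 := by
        cases i with
        | zero =>
          have : stir (m+1+0) 0 = 0 := by simp [stir]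
          simp [this]
        | succ j =>
          have h2 : stir (j+1) 0 = 0 := rfl
          have h0 : (0:ℕ)+(j+1) = j+1 := by omega
          rw [h0, h2]
          simp
      rw [hL]
      symm
      apply Finset.sum_eq_zero
      intro k hk
      rcases le_or_gt k (m+1) with h | h
      · rw [A_low (by omega) (by push_cast; omega)]
        ring
      · rw [Nat.choose_eq_zero_of_lt (by omega)]
        push_cast
        ring
    | succ n ihn =>
      have e1 : m+1+(n+1) = (m+n+1)+1 := by omega
      have e2 : n+1+i = (n+i)+1 := by omega
      have hac : (stir (m+n+1) (n+i) : ℤ) * (stir (n+i) n : ℤ)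
          = ∑ k ∈ range (2*m+3), A (m+1) i k * ((m+n+1).choose k : ℤ) := by
        have := ihn
        rw [show m+1+n = m+n+1 by omega, show 2*(m+1)+1 = 2*m+3 by omega] at this
        exact this
      have hbs := ihm i (n+1)
      rw [show m+(n+1) = m+n+1 by omega, show n+1+i = (n+i)+1 by omega,
        stir_succ (n+i) n] at hbs
      push_cast at hbs
      have had : ((n:ℤ)+i) * ((stir (m+n+1) (n+i) : ℤ) * (stir (n+i) (n+1) : ℤ))
          = ((n:ℤ)+i) * ∑ k ∈ range (2*m+1), A m ((i:ℤ)-1) k * ((m+n+1).choose k : ℤ) := by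
        cases i with
        | zero =>
          have hz : ∀ k ∈ range (2*m+1),
              A m (((0:ℕ):ℤ)-1) k * ((m+n+1).choose k : ℤ) = 0 := by
            intro k _
            rw [A_neg (Or.inl (by norm_num))]
            ring
          rw [Finset.sum_congr rfl hz, Finset.sum_const_zero]
          simp only [Nat.add_zero]
          rw [stir_eq_zero (show n < n+1 by omega)]
          push_cast
          ring
        | succ j =>
          have := ihm j (n+1)
          rw [show m+(n+1) = m+n+1 by omega, show n+1+j = (n+j)+1 by omega] at this
          rw [show n+(j+1) = (n+j)+1 by omega]
          push_cast at this ⊢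
          rw [show ((j:ℤ)+1-1) = (j:ℤ) by ring]
          linear_combination ((n:ℤ)+j+1) * this
      have hstep := step m n (i:ℤ)
      rw [e1, e2, stir_succ (m+n+1) (n+i), stir_succ (n+i) n,
        show (m+n+1)+1 = m+n+2 by omega, show 2*(m+1)+1 = 2*m+3 by omega, hstep]
      push_cast
      linear_combination hac + ((m:ℤ)+(n:ℤ)+1) * hbs + had

noncomputable section
open MvPolynomial


def sgn (i t : ℕ) : ℤ := (-1)^(i-t) * stir i t

lemma sgn_succ (i t : ℕ) : sgn (i+1) (t+1) = sgn i t - i * sgn i (t+1) := by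
  unfold sgn
  rcases le_or_gt (t+1) i with h | h
  · rw [show i+1-(t+1) = (i-(t+1))+1 by omega, show i-t = (i-(t+1))+1 by omega,
      stir_succ, pow_succ]
    push_cast
    ring
  · rw [show i+1-(t+1) = 0 by omega, show i-t = 0 by omega, stir_succ,
      stir_eq_zero (show i < t+1 by omega)]
    push_cast
    ring

lemma falling (i : ℕ) : (∏ j ∈ range i, (X 0 - C (j:ℤ)) : MvPolynomial (Fin 2) ℤ)
    = ∑ t ∈ range (i+1), C (sgn i t) * X 0 ^ t := by
  induction i with
  | zero => simp [sgn, stir]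
  | succ i ih =>
    rw [Finset.prod_range_succ, ih]
    have rhs : ∑ t ∈ range (i+2), C (sgn (i+1) t) * (X 0:MvPolynomial (Fin 2) ℤ) ^ t
        = ∑ t ∈ range (i+1), C (sgn (i+1) (t+1)) * X 0 ^ (t+1) + C (sgn (i+1) 0) := by
      rw [Finset.sum_range_succ' (fun t => C (sgn (i+1) t) * (X 0:MvPolynomial (Fin 2) ℤ)^t) (i+1)]
      simp
    rw [rhs]
    have h0 : sgn (i+1) 0 = 0 := by simp [sgn, stir]
    have e : ∀ t ∈ range (i+1), C (sgn (i+1) (t+1)) * (X 0:MvPolynomial (Fin 2) ℤ) ^ (t+1)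
        = C (sgn i t) * X 0 ^ (t+1) - C ((i:ℤ) * sgn i (t+1)) * X 0 ^ (t+1) := by
      intro t _
      rw [sgn_succ, map_sub, map_mul]
      push_cast
      ring
    rw [Finset.sum_congr rfl e, h0, map_zero, add_zero, Finset.sum_sub_distrib]
    have e2 : ∑ t ∈ range (i+1), C ((i:ℤ) * sgn i (t+1)) * (X 0:MvPolynomial (Fin 2) ℤ) ^ (t+1)
        = ∑ t ∈ range (i+1), C ((i:ℤ) * sgn i t) * X 0 ^ t := by
      rw [Finset.sum_range_succ'
        (fun t => C ((i:ℤ) * sgn i t) * (X 0:MvPolynomial (Fin 2) ℤ)^t) i]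
      rw [Finset.sum_range_succ]
      have hz1 : sgn i (i+1) = 0 := by simp [sgn, stir_eq_zero (Nat.lt_succ_self i)]
      have hz2 : (i:ℤ) * sgn i 0 = 0 := by
        cases i with
        | zero => simp
        | succ j =>
          have : stir (j+1) 0 = 0 := rfl
          simp [sgn, this]
      rw [hz1, hz2]
      simp
    rw [e2]
    rw [mul_sub, Finset.sum_mul, Finset.sum_mul]
    congr 1
    · exact Finset.sum_congr rfl (fun t _ => by rw [pow_succ]; ring)
    · exact Finset.sum_congr rfl (fun t _ => by rw [map_mul]; ring)

lemma binom (d : ℕ) : ((1 + X 1 : MvPolynomial (Fin 2) ℤ)) ^ d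
    = ∑ j ∈ range (d+1), C ((d.choose j : ℕ) : ℤ) * X 1 ^ j := by
  rw [add_comm, add_pow]
  refine Finset.sum_congr rfl (fun j _ => ?_)
  rw [one_pow, mul_one]
  rw [show ((d.choose j : ℕ) : MvPolynomial (Fin 2) ℤ) = C ((d.choose j : ℕ) : ℤ) by
    simp]
  ring


noncomputable section

def T (n i t j : ℕ) : MvPolynomial (Fin 2) ℤ :=
  C ((stir n i : ℤ) * sgn i t * (((n-i).choose j : ℕ) : ℤ)) * X 0 ^ t * X 1 ^ j

def coefL (n m j : ℕ) : ℤ :=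
  ∑ i ∈ range (m+1),
    (-1:ℤ)^i * (stir n (n-m+i) : ℤ) * (stir (n-m+i) (n-m) : ℤ) * (((m-i).choose j : ℕ) : ℤ)

lemma stir_zero {n : ℕ} (hn : 1 ≤ n) : stir n 0 = 0 := by
  cases n with
  | zero => omega
  | succ n => rfl

lemma range_succ_eq_insert (n : ℕ) : range (n+1) = insert 0 (Finset.Icc 1 n) := by
  ext x
  simp
  omega

lemma LA (n : ℕ) (hn : 1 ≤ n) :
    gCleared n = ∑ i ∈ range (n+1), ∑ t ∈ range (n+1), ∑ j ∈ range (n+1), T n i t j := by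
  unfold gCleared
  have h0 : ∑ t ∈ range (n+1), ∑ j ∈ range (n+1), T n 0 t j = 0 := by
    apply Finset.sum_eq_zero
    intro t _
    apply Finset.sum_eq_zero
    intro j _
    unfold T
    rw [stir_zero hn]
    simp
  have hins : ∑ i ∈ Finset.Icc 1 n, ∑ t ∈ range (n+1), ∑ j ∈ range (n+1), T n i t j
      = ∑ i ∈ range (n+1), ∑ t ∈ range (n+1), ∑ j ∈ range (n+1), T n i t j := by
    apply Finset.sum_subset
    · intro x hx
      rw [Finset.mem_Icc] at hx
      rw [Finset.mem_range]
      omega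
    · intro x hx hnx
      rw [Finset.mem_range] at hx
      rw [Finset.mem_Icc] at hnx
      have : x = 0 := by omega
      subst this
      exact h0
  rw [← hins]
  refine Finset.sum_congr rfl (fun i hi => ?_)
  rw [Finset.mem_Icc] at hi
  rw [falling, binom]
  have hmul : C (stir n i:ℤ) * ∑ t ∈ range (i+1), C (sgn i t) * (X 0:MvPolynomial (Fin 2) ℤ) ^ t
      = ∑ t ∈ range (i+1), C (stir n i:ℤ) * (C (sgn i t) * X 0 ^ t) := by
    rw [Finset.mul_sum]
  have expand : (C (stir n i:ℤ) * ∑ t ∈ range (i+1), C (sgn i t) * (X 0:MvPolynomial (Fin 2) ℤ) ^ t) *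
      ∑ j ∈ range (n-i+1), C (((n-i).choose j : ℕ):ℤ) * X 1 ^ j
      = ∑ t ∈ range (i+1), ∑ j ∈ range (n-i+1), T n i t j := by
    rw [hmul, Finset.sum_mul_sum]
    refine Finset.sum_congr rfl (fun t _ => Finset.sum_congr rfl (fun j _ => ?_))
    unfold T
    rw [map_mul, map_mul]
    ring
  rw [expand]
  have e1 : ∀ t ∈ range (i+1), ∑ j ∈ range (n-i+1), T n i t j
      = ∑ j ∈ range (n+1), T n i t j := by
    intro t _
    apply Finset.sum_subset (Finset.range_subset_range.mpr (by omega))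
    intro j _ hj
    rw [Finset.mem_range] at hj
    unfold T
    rw [Nat.choose_eq_zero_of_lt (by omega)]
    simp
  rw [Finset.sum_congr rfl e1]
  apply Finset.sum_subset (Finset.range_subset_range.mpr (by omega))
  intro t _ ht
  rw [Finset.mem_range] at ht
  apply Finset.sum_eq_zero
  intro j _
  unfold T
  have : sgn i t = 0 := by simp [sgn, stir_eq_zero (show i < t by omega)]
  rw [this]
  simp

lemma T_sgn_zero {n m i j : ℕ} (h : i < n - m) : T n i (n-m) j = 0 := by
  unfold T
  have : sgn i (n-m) = 0 := by simp [sgn, stir_eq_zero (show i < n - m by omega)]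
  rw [this]
  simp

lemma LD (n m j : ℕ) (hm : m ≤ n) (hj : m < j) :
    ∑ i ∈ range (n+1), T n i (n-m) j = 0 := by
  apply Finset.sum_eq_zero
  intro i _
  rcases lt_or_ge i (n-m) with h | h
  · exact T_sgn_zero h
  · unfold T
    rw [Nat.choose_eq_zero_of_lt (show n - i < j by omega)]
    simp

lemma LE' (n m j : ℕ) (hm : m ≤ n) :
    ∑ i ∈ range (n+1), T n i (n-m) j = X 0 ^ (n-m) * X 1 ^ j * C (coefL n m j) := by
  rw [Finset.range_eq_Ico,
    ← Finset.sum_Ico_consecutive _ (Nat.zero_le (n-m)) (show n-m ≤ n+1 by omega)]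
  have h1 : ∑ i ∈ Finset.Ico 0 (n-m), T n i (n-m) j = 0 := by
    apply Finset.sum_eq_zero
    intro i hi
    rw [Finset.mem_Ico] at hi
    exact T_sgn_zero hi.2
  rw [h1, zero_add, Finset.sum_Ico_eq_sum_range,
    show n+1-(n-m) = m+1 by omega]
  have e : ∀ i ∈ range (m+1), T n (n-m+i) (n-m) j
      = C ((-1:ℤ)^i * (stir n (n-m+i) : ℤ) * (stir (n-m+i) (n-m) : ℤ)
          * (((m-i).choose j : ℕ) : ℤ)) * (X 0 ^ (n-m) * X 1 ^ j) := by
    intro i hi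
    rw [Finset.mem_range] at hi
    unfold T sgn
    rw [show (n-m+i)-(n-m) = i by omega, show n-(n-m+i) = m-i by omega]
    ring
  rw [Finset.sum_congr rfl e, ← Finset.sum_mul, ← map_sum]
  unfold coefL
  ring

lemma LF (n m j : ℕ) (hm1 : 1 ≤ m) (hm : m ≤ n) :
    coefL n m j = ∑ k ∈ Finset.Icc (m+1) (2*m),
      (n.choose k : ℤ) * ∑ i ∈ range (m+1), (-1:ℤ)^i * (((m-i).choose j : ℕ):ℤ) * A m i k := by
  unfold coefL
  have hkey : ∀ i ∈ range (m+1), (-1:ℤ)^i * (stir n (n-m+i) : ℤ) * (stir (n-m+i) (n-m) : ℤ)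
      * (((m-i).choose j : ℕ) : ℤ)
      = ∑ k ∈ range (2*m+1),
          (-1:ℤ)^i * (((m-i).choose j : ℕ):ℤ) * A m i k * (n.choose k : ℤ) := by
    intro i _
    have h := key m i (n-m)
    rw [show m+(n-m) = n by omega, show (n-m)+i = n-m+i by omega] at h
    have : (-1:ℤ)^i * (stir n (n-m+i) : ℤ) * (stir (n-m+i) (n-m) : ℤ) * (((m-i).choose j : ℕ):ℤ)
        = ((-1:ℤ)^i * (((m-i).choose j : ℕ):ℤ)) * ((stir n (n-m+i) : ℤ) * (stir (n-m+i) (n-m):ℤ)) := by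
      ring
    rw [this, h, Finset.mul_sum]
    exact Finset.sum_congr rfl (fun k _ => by ring)
  rw [Finset.sum_congr rfl hkey, Finset.sum_comm]
  have e : ∀ k ∈ range (2*m+1),
      ∑ i ∈ range (m+1), (-1:ℤ)^i * (((m-i).choose j : ℕ):ℤ) * A m i k * (n.choose k : ℤ)
      = (n.choose k : ℤ) * ∑ i ∈ range (m+1), (-1:ℤ)^i * (((m-i).choose j : ℕ):ℤ) * A m i k := by
    intro k _
    rw [Finset.mul_sum]
    exact Finset.sum_congr rfl (fun i _ => by ring)
  rw [Finset.sum_congr rfl e]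
  have hset : range (2*m+1) = range (m+1) ∪ Finset.Icc (m+1) (2*m) := by
    ext x
    simp
    omega
  have hd : Disjoint (range (m+1)) (Finset.Icc (m+1) (2*m)) := by
    rw [Finset.disjoint_left]
    intro a ha hb
    rw [Finset.mem_range] at ha
    rw [Finset.mem_Icc] at hb
    omega
  rw [hset, Finset.sum_union hd]
  have h1 : ∑ k ∈ range (m+1),
      (n.choose k : ℤ) * ∑ i ∈ range (m+1), (-1:ℤ)^i * (((m-i).choose j : ℕ):ℤ) * A m i k = 0 := by
    apply Finset.sum_eq_zero
    intro k hk
    rw [Finset.mem_range] at hk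
    have : ∑ i ∈ range (m+1), (-1:ℤ)^i * (((m-i).choose j : ℕ):ℤ) * A m i k = 0 := by
      apply Finset.sum_eq_zero
      intro i _
      rw [A_low hm1 (by push_cast; omega)]
      ring
    rw [this, mul_zero]
  rw [h1, zero_add]

theorem stmt_19 (n : ℕ) (hn : 1 ≤ n) :
    gCleared n
      = (X 0 : MvPolynomial (Fin 2) ℤ) ^ n
          + ∑ m ∈ Finset.Icc 1 n, ∑ j ∈ Finset.range (m + 1),
              (X 0) ^ (n - m) * (X 1) ^ j *
                MvPolynomial.C (∑ k ∈ Finset.Icc (m + 1) (2 * m),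
                  (n.choose k : ℤ) *
                    ∑ i ∈ Finset.range (m + 1),
                      (-1 : ℤ) ^ i * ((m - i).choose j : ℤ) * A m i k) := by
  rw [LA n hn]
  rw [Finset.sum_comm]
  have swap2 : ∑ t ∈ range (n+1), ∑ i ∈ range (n+1), ∑ j ∈ range (n+1), T n i t j
      = ∑ t ∈ range (n+1), ∑ j ∈ range (n+1), ∑ i ∈ range (n+1), T n i t j :=
    Finset.sum_congr rfl (fun t _ => Finset.sum_comm)
  rw [swap2]
  rw [← Finset.sum_range_reflect (fun t => ∑ j ∈ range (n+1), ∑ i ∈ range (n+1), T n i t j) (n+1)]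
  have e0 : ∀ m ∈ range (n+1),
      ∑ j ∈ range (n+1), ∑ i ∈ range (n+1), T n i (n+1-1-m) j
      = ∑ j ∈ range (m+1), X 0 ^ (n-m) * X 1 ^ j * C (coefL n m j) := by
    intro m hm
    rw [Finset.mem_range] at hm
    rw [show n+1-1-m = n-m by omega]
    rw [show ∑ j ∈ range (n+1), ∑ i ∈ range (n+1), T n i (n-m) j
        = ∑ j ∈ range (m+1), ∑ i ∈ range (n+1), T n i (n-m) j from
      (Finset.sum_subset (Finset.range_subset_range.mpr (by omega)) (fun j _ hj => by
        rw [Finset.mem_range] at hj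
        exact LD n m j (by omega) (by omega))).symm]
    exact Finset.sum_congr rfl (fun j _ => LE' n m j (by omega))
  rw [Finset.sum_congr rfl e0]
  rw [range_succ_eq_insert, Finset.sum_insert (by simp)]
  have hm0 : ∑ j ∈ range (0+1), X 0 ^ (n-0) * X 1 ^ j * C (coefL n 0 j)
      = (X 0 : MvPolynomial (Fin 2) ℤ) ^ n := by
    rw [Finset.sum_range_one]
    have : coefL n 0 0 = 1 := by
      unfold coefL
      rw [Finset.sum_range_one]
      simp [stir_self, show n - 0 + 0 = n by omega]
    rw [this]
    simp
  rw [hm0]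
  congr 1
  refine Finset.sum_congr rfl (fun m hm => ?_)
  rw [Finset.mem_Icc] at hm
  refine Finset.sum_congr rfl (fun j _ => ?_)
  rw [LF n m j hm.1 hm.2]



end
end
end
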